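/- In the ring of formal power series over Z[q], the product ∏_{n ≥ 1} (1 − x^n)^{I_n(q)} equals (1 − qx)/(1 − x), where I_n(q) = (1/n) ∑_{d | n} μ(d)(q^{n/d} − 1). -/

import Mathlib

open PowerSeries Finset

noncomputable def NAgeom (n : ℕ) : PowerSeries ℤ :=
  PowerSeries.mk fun k => if n ∣ k then 1 else 0

lemma NAgeom_const (n : ℕ) : PowerSeries.constantCoeff (NAgeom n) = 1 := by
  simp [NAgeom, PowerSeries.constantCoeff_mk]

lemma NAgeom_mul {n : ℕ} (hn : 1 ≤ n) :
    ((1 : PowerSeries ℤ) - X ^ n) * NAgeom n = 1 := by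
  ext k
  rw [sub_mul, one_mul, map_sub, coeff_X_pow_mul', coeff_one]
  rcases eq_or_ne k 0 with rfl | hk
  · simp [NAgeom, PowerSeries.coeff_mk, (by omega : ¬ n ≤ 0), Nat.one_le_iff_ne_zero.mp hn]
  · simp only [NAgeom, PowerSeries.coeff_mk, if_neg hk]
    by_cases h : n ≤ k
    · have hiff : n ∣ k ↔ n ∣ k - n := by
        constructor
        · intro hd; exact (Nat.dvd_sub hd dvd_rfl)
        · intro hd
          have := Nat.dvd_add hd (dvd_refl n)
          rwa [Nat.sub_add_cancel h] at this
      rw [if_pos h]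
      by_cases hd : n ∣ k
      · rw [if_pos hd, if_pos (hiff.mp hd), sub_self]
      · rw [if_neg hd, if_neg (fun hc => hd (hiff.mpr hc)), sub_self]
    · rw [if_neg h, sub_zero]
      have : ¬ n ∣ k := fun hd => h (Nat.le_of_dvd (Nat.pos_of_ne_zero hk) hd)
      rw [if_neg this]

/-- cancellation: if F * G vanishes below N and G has constant coeff 1 then F vanishes below N -/
lemma NAcancel {F G : PowerSeries ℤ} (hG : PowerSeries.constantCoeff G = 1)
    {N : ℕ} (h : ∀ k < N, PowerSeries.coeff k (F * G) = 0) :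
    ∀ k < N, PowerSeries.coeff k F = 0 := by
  intro k
  induction k using Nat.strong_induction_on with
  | _ k ih =>
    intro hk
    have h0 := h k hk
    rw [PowerSeries.coeff_mul, Finset.sum_eq_single (k, 0)] at h0
    · simpa [PowerSeries.coeff_zero_eq_constantCoeff, hG] using h0
    · rintro ⟨i, j⟩ hmem hne
      rw [Finset.HasAntidiagonal.mem_antidiagonal] at hmem
      simp only at hmem
      have hi : i < k := by
        rcases Nat.lt_or_ge i k with h' | h'
        · exact h'
        · exact absurd (by simp [(by omega : i = k), (by omega : j = 0)]) hne
      rw [ih i hi (lt_trans hi hk), zero_mul]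
    · intro habs; exact absurd (Finset.HasAntidiagonal.mem_antidiagonal.2 (by simp)) habs

lemma NAmul_left {W : PowerSeries ℤ} {N : ℕ} (h : ∀ k < N, PowerSeries.coeff k W = 0)
    (P : PowerSeries ℤ) : ∀ k < N, PowerSeries.coeff k (P * W) = 0 := by
  intro k hk
  rw [PowerSeries.coeff_mul]
  apply Finset.sum_eq_zero
  rintro ⟨i, j⟩ hmem
  rw [Finset.HasAntidiagonal.mem_antidiagonal] at hmem
  rw [h j (by omega), mul_zero]


lemma NAdpow (x : PowerSeries ℤ) (m : ℕ) :
    d⁄dX ℤ (x ^ m) * x = (m : PowerSeries ℤ) * x ^ m * d⁄dX ℤ x := by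
  cases m with
  | zero => simp
  | succ k =>
    rw [Derivation.leibniz_pow]
    simp only [Nat.succ_sub_one, smul_eq_mul, nsmul_eq_mul]
    push_cast
    ring_nf

lemma NAdXpow (n : ℕ) :
    d⁄dX ℤ ((X : PowerSeries ℤ) ^ n) = (n : PowerSeries ℤ) * X ^ (n - 1) := by
  rw [Derivation.leibniz_pow]
  simp [nsmul_eq_mul, smul_eq_mul]

lemma NAderiv_prod (I : ℕ → ℕ) (f : ℕ → PowerSeries ℤ) (s : Finset ℕ) :
    d⁄dX ℤ (∏ n ∈ s, f n ^ I n) * ∏ n ∈ s, f n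
      = (∏ n ∈ s, f n ^ I n) *
        ∑ n ∈ s, (I n : PowerSeries ℤ) * d⁄dX ℤ (f n) * ∏ m ∈ s.erase n, f m := by
  induction s using Finset.cons_induction with
  | empty => simp
  | cons a s ha ih =>
    rw [Finset.prod_cons, Finset.prod_cons, Finset.sum_cons, Finset.erase_cons]
    have hsum : ∑ n ∈ s, (I n : PowerSeries ℤ) * d⁄dX ℤ (f n) *
        ∏ m ∈ (Finset.cons a s ha).erase n, f m
        = f a * ∑ n ∈ s, (I n : PowerSeries ℤ) * d⁄dX ℤ (f n) * ∏ m ∈ s.erase n, f m := by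
      rw [Finset.mul_sum]
      apply Finset.sum_congr rfl
      intro n hn
      have hne : a ≠ n := fun h => ha (h ▸ hn)
      rw [Finset.erase_cons_of_ne ha hne, Finset.prod_cons]
      ring
    rw [hsum]
    rw [Derivation.leibniz]
    simp only [smul_eq_mul]
    have hd := NAdpow (f a) (I a)
    calc (f a ^ I a * d⁄dX ℤ (∏ n ∈ s, f n ^ I n)
            + (∏ n ∈ s, f n ^ I n) * d⁄dX ℤ (f a ^ I a)) * (f a * ∏ n ∈ s, f n)
        = f a ^ I a * f a * (d⁄dX ℤ (∏ n ∈ s, f n ^ I n) * ∏ n ∈ s, f n)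
            + (∏ n ∈ s, f n ^ I n) * (d⁄dX ℤ (f a ^ I a) * f a) * ∏ n ∈ s, f n := by ring
      _ = f a ^ I a * f a * ((∏ n ∈ s, f n ^ I n) *
              ∑ n ∈ s, (I n : PowerSeries ℤ) * d⁄dX ℤ (f n) * ∏ m ∈ s.erase n, f m)
            + (∏ n ∈ s, f n ^ I n) *
              ((I a : PowerSeries ℤ) * f a ^ I a * d⁄dX ℤ (f a)) * ∏ n ∈ s, f n := by
          rw [ih, hd]
      _ = f a ^ I a * (∏ n ∈ s, f n ^ I n) *
            ((I a : PowerSeries ℤ) * d⁄dX ℤ (f a) * ∏ n ∈ s, f n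
              + f a * ∑ n ∈ s, (I n : PowerSeries ℤ) * d⁄dX ℤ (f n) * ∏ m ∈ s.erase n, f m) := by
          ring

lemma NAderiv_one_sub (n : ℕ) :
    d⁄dX ℤ ((1 : PowerSeries ℤ) - X ^ n) = -((n : PowerSeries ℤ) * X ^ (n - 1)) := by
  rw [map_sub, NAdXpow, Derivation.map_one_eq_zero, zero_sub]

lemma NAcoeff_term {n : ℕ} (hn : 1 ≤ n) (j : ℕ) (c : ℕ) :
    PowerSeries.coeff j ((c : PowerSeries ℤ) * d⁄dX ℤ ((1 : PowerSeries ℤ) - X ^ n) * NAgeom n)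
      = if n ∣ j + 1 then -((n : ℤ) * (c : ℤ)) else 0 := by
  rw [NAderiv_one_sub]
  have hexpr : (c : PowerSeries ℤ) * -((n : PowerSeries ℤ) * X ^ (n - 1)) * NAgeom n
      = -(((c * n : ℕ) : PowerSeries ℤ) * (NAgeom n * X ^ (n - 1))) := by
    push_cast
    ring
  rw [hexpr, map_neg, ← map_natCast C (c * n), coeff_C_mul, coeff_mul_X_pow']
  have hdvd : (if n - 1 ≤ j then (if n ∣ j - (n - 1) then (1 : ℤ) else 0) else 0)
      = if n ∣ j + 1 then 1 else 0 := by
    by_cases h : n - 1 ≤ j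
    · rw [if_pos h]
      have hnle : n ≤ j + 1 := by omega
      have hsub : j - (n - 1) = j + 1 - n := by omega
      have hiff : n ∣ j - (n - 1) ↔ n ∣ j + 1 := by
        rw [hsub]
        constructor
        · intro hd
          have := Nat.dvd_add hd (dvd_refl n)
          rwa [Nat.sub_add_cancel hnle] at this
        · intro hd
          exact Nat.dvd_sub hd dvd_rfl
      simp [hiff]
    · rw [if_neg h]
      have : ¬ n ∣ j + 1 := fun hd => by
        have := Nat.le_of_dvd (by omega) hd
        omega
      rw [if_neg this]
  have : PowerSeries.coeff j (NAgeom n) = if n ∣ j then 1 else 0 := by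
    simp [NAgeom, PowerSeries.coeff_mk]
  simp only [NAgeom, PowerSeries.coeff_mk]
  rw [hdvd]
  split_ifs with h
  · push_cast; ring
  · simp

lemma NAhsum (q : ℕ) (I : ℕ → ℕ)
    (hI : ∀ n : ℕ, 1 ≤ n → (n : ℤ) * I n
      = ∑ d ∈ n.divisors,
          (ArithmeticFunction.moebius d : ℤ) * ((q : ℤ) ^ (n / d) - 1)) :
    ∀ n : ℕ, 0 < n → ∑ d ∈ n.divisors, (d : ℤ) * I d = (q : ℤ) ^ n - 1 := by
  have := (ArithmeticFunction.sum_eq_iff_sum_smul_moebius_eq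
    (f := fun d => (d : ℤ) * I d) (g := fun n => (q : ℤ) ^ n - 1)).mpr
  apply this
  intro n hn
  rw [Nat.sum_divisorsAntidiagonal (fun a b => (ArithmeticFunction.moebius a : ℤ) • ((q:ℤ) ^ b - 1))]
  simp only [zsmul_eq_mul]
  exact (hI n hn).symm



/-- In formal power series, `∏_{n ≥ 1} (1 − x^n)^{I_n(q)} = (1 − qx)/(1 − x)`,
where `I_n(q) = (1/n) ∑_{d ∣ n} μ(d)(q^{n/d} − 1)`: equivalently, multiplying
through by `1 - x`, every truncation of `(∏_{n=1}^N (1 − x^n)^{I_n}) · (1 − x)`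
agrees with that of `1 − qx`. -/
theorem prod_one_sub_pow_IM (q : ℕ) (hq : 1 ≤ q) (I : ℕ → ℕ)
    (hI : ∀ n : ℕ, 1 ≤ n → (n : ℤ) * I n
      = ∑ d ∈ n.divisors,
          (ArithmeticFunction.moebius d : ℤ) * ((q : ℤ) ^ (n / d) - 1))
    (N : ℕ) :
    PowerSeries.trunc (N + 1)
        (((∏ n ∈ Finset.Icc 1 N, (1 - (PowerSeries.X : PowerSeries ℤ) ^ n) ^ I n)
          * (1 - PowerSeries.X)))
      = PowerSeries.trunc (N + 1)
          (1 - PowerSeries.C (q : ℤ) * PowerSeries.X) := by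
  have hsum := NAhsum q I hI
  set P : PowerSeries ℤ := ∏ n ∈ Finset.Icc 1 N, (1 - (X : PowerSeries ℤ) ^ n) ^ I n with hPdef
  set B : PowerSeries ℤ := 1 - PowerSeries.C (q : ℤ) * X with hBdef
  set Q : PowerSeries ℤ := ∏ n ∈ Finset.Icc 1 N, (1 - (X : PowerSeries ℤ) ^ n) with hQdef
  set S : PowerSeries ℤ := ∑ n ∈ Finset.Icc 1 N,
    (I n : PowerSeries ℤ) * d⁄dX ℤ ((1 : PowerSeries ℤ) - X ^ n)
      * ∏ m ∈ (Finset.Icc 1 N).erase n, (1 - (X : PowerSeries ℤ) ^ m) with hSdef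
  set Gg : PowerSeries ℤ := ∏ n ∈ Finset.Icc 1 N, NAgeom n with hGdef
  set Mm : PowerSeries ℤ := ∑ n ∈ Finset.Icc 1 N,
    (I n : PowerSeries ℤ) * d⁄dX ℤ ((1 : PowerSeries ℤ) - X ^ n) * NAgeom n with hMdef
  set A : PowerSeries ℤ := P * (1 - X) with hAdef
  clear_value P B Q S Gg Mm A
  have hPS : d⁄dX ℤ P * Q = P * S := by
    rw [hPdef, hQdef, hSdef]
    exact NAderiv_prod I (fun n => 1 - X ^ n) (Finset.Icc 1 N)
  have hSG : S * Gg = Mm := by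
    rw [hSdef, hMdef, Finset.sum_mul]
    apply Finset.sum_congr rfl
    intro n hn
    have hn1 : 1 ≤ n := (Finset.mem_Icc.mp hn).1
    rw [hGdef, ← Finset.mul_prod_erase _ _ hn]
    have hprod : (∏ m ∈ (Finset.Icc 1 N).erase n, (1 - (X : PowerSeries ℤ) ^ m))
        * ∏ m ∈ (Finset.Icc 1 N).erase n, NAgeom m = 1 := by
      rw [← Finset.prod_mul_distrib]
      apply Finset.prod_eq_one
      intro m hm
      exact NAgeom_mul (Finset.mem_Icc.mp (Finset.mem_of_mem_erase hm)).1
    calc (I n : PowerSeries ℤ) * d⁄dX ℤ ((1 : PowerSeries ℤ) - X ^ n)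
          * (∏ m ∈ (Finset.Icc 1 N).erase n, (1 - (X : PowerSeries ℤ) ^ m))
          * (NAgeom n * ∏ m ∈ (Finset.Icc 1 N).erase n, NAgeom m)
        = (I n : PowerSeries ℤ) * d⁄dX ℤ ((1 : PowerSeries ℤ) - X ^ n) * NAgeom n
          * ((∏ m ∈ (Finset.Icc 1 N).erase n, (1 - (X : PowerSeries ℤ) ^ m))
            * ∏ m ∈ (Finset.Icc 1 N).erase n, NAgeom m) := by ring
      _ = (I n : PowerSeries ℤ) * d⁄dX ℤ ((1 : PowerSeries ℤ) - X ^ n) * NAgeom n := by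
          rw [hprod, mul_one]
  have hQG : Q * Gg = 1 := by
    rw [hQdef, hGdef, ← Finset.prod_mul_distrib]
    apply Finset.prod_eq_one
    intro n hn
    exact NAgeom_mul (Finset.mem_Icc.mp hn).1
  have hGc : PowerSeries.constantCoeff Gg = 1 := by
    rw [hGdef, map_prod]
    exact Finset.prod_eq_one fun n _ => NAgeom_const n
  have hQc : PowerSeries.constantCoeff Q = 1 := by
    rw [hQdef, map_prod]
    apply Finset.prod_eq_one
    intro n hn
    have hn1 : 1 ≤ n := (Finset.mem_Icc.mp hn).1
    simp [zero_pow (by omega : n ≠ 0)]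
  have hMj : ∀ j, j < N → PowerSeries.coeff j Mm = 1 - (q : ℤ) ^ (j + 1) := by
    intro j hj
    rw [hMdef, map_sum]
    rw [Finset.sum_congr rfl (fun n hn =>
      NAcoeff_term (Finset.mem_Icc.mp hn).1 j (I n))]
    rw [← Finset.sum_filter]
    have hfil : (Finset.Icc 1 N).filter (fun n => n ∣ j + 1) = (j + 1).divisors := by
      ext d
      simp only [Finset.mem_filter, Finset.mem_Icc, Nat.mem_divisors]
      constructor
      · rintro ⟨⟨h1, h2⟩, hd⟩
        exact ⟨hd, by omega⟩
      · rintro ⟨hd, -⟩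
        have hd1 : 1 ≤ d := Nat.pos_of_dvd_of_pos hd (by omega)
        have hdle : d ≤ j + 1 := Nat.le_of_dvd (by omega) hd
        exact ⟨⟨hd1, by omega⟩, hd⟩
    rw [hfil]
    have hs := hsum (j + 1) (by omega)
    have : ∑ d ∈ (j + 1).divisors, -((d : ℤ) * (I d : ℤ))
        = -∑ d ∈ (j + 1).divisors, (d : ℤ) * (I d : ℤ) := by
      rw [Finset.sum_neg_distrib]
    rw [this, hs]
    ring
  have hM1 : ∀ j, j < N → PowerSeries.coeff j ((1 - X) * Mm)
      = (q : ℤ) ^ j - (q : ℤ) ^ (j + 1) := by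
    intro j hj
    have hx : ((1 : PowerSeries ℤ) - X) * Mm = Mm - Mm * X ^ 1 := by ring
    rw [hx, map_sub, coeff_mul_X_pow']
    cases j with
    | zero =>
      rw [if_neg (by omega)]
      rw [hMj 0 hj]
      ring
    | succ k =>
      rw [if_pos (by omega), hMj (k + 1) hj]
      have : k + 1 - 1 = k := rfl
      rw [this, hMj k (by omega)]
      ring
  have hBM1 : ∀ j, j < N → PowerSeries.coeff j (B * ((1 - X) * Mm))
      = if j = 0 then 1 - (q : ℤ) else 0 := by
    intro j hj
    have hx : B * ((1 - X) * Mm)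
        = (1 - X) * Mm - PowerSeries.C (q : ℤ) * (((1 - X) * Mm) * X ^ 1) := by
      rw [hBdef]; ring
    rw [hx, map_sub, coeff_C_mul, coeff_mul_X_pow']
    cases j with
    | zero =>
      rw [if_neg (by omega), if_pos rfl, hM1 0 hj]
      ring
    | succ k =>
      rw [if_pos (by omega), if_neg (by omega), hM1 (k + 1) hj]
      have : k + 1 - 1 = k := rfl
      rw [this, hM1 k (by omega)]
      ring
  set W : PowerSeries ℤ := B * (1 - X) * S + PowerSeries.C ((q : ℤ) - 1) * Q with hWdef
  have hWG : W * Gg = B * ((1 - X) * Mm) + PowerSeries.C ((q : ℤ) - 1) := by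
    rw [hWdef]
    calc (B * (1 - X) * S + PowerSeries.C ((q : ℤ) - 1) * Q) * Gg
        = B * ((1 - X) * (S * Gg)) + PowerSeries.C ((q : ℤ) - 1) * (Q * Gg) := by ring
      _ = B * ((1 - X) * Mm) + PowerSeries.C ((q : ℤ) - 1) := by
          rw [hSG, hQG, mul_one]
  have hW : ∀ k, k < N → PowerSeries.coeff k W = 0 := by
    apply NAcancel hGc
    intro k hk
    rw [hWG, map_add, hBM1 k hk, coeff_C]
    split_ifs with h <;> ring
  have hPW := NAmul_left hW P
  have hDA : d⁄dX ℤ A = -P + (1 - X) * d⁄dX ℤ P := by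
    rw [hAdef, Derivation.leibniz]
    rw [map_sub, Derivation.map_one_eq_zero, derivative_X]
    simp only [smul_eq_mul]
    ring
  have hDB : d⁄dX ℤ B = -(PowerSeries.C (q : ℤ)) := by
    rw [hBdef, map_sub, Derivation.map_one_eq_zero, Derivation.leibniz, derivative_X,
      derivative_C]
    simp only [smul_eq_mul]
    ring
  have hid : (d⁄dX ℤ A * B - d⁄dX ℤ B * A) * Q = P * W := by
    rw [hDA, hDB, hAdef, hWdef, hBdef]
    have hC : PowerSeries.C ((q : ℤ) - 1) = PowerSeries.C (q : ℤ) - 1 := by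
      rw [map_sub, map_one]
    rw [hC]
    linear_combination ((1 - PowerSeries.C (q : ℤ) * X) * (1 - X)) * hPS
  have hEB : ∀ k, k < N → PowerSeries.coeff k (d⁄dX ℤ A * B - d⁄dX ℤ B * A) = 0 := by
    apply NAcancel hQc
    intro k hk
    rw [hid]
    exact hPW k hk
  have hA0 : PowerSeries.coeff 0 A = 1 := by
    rw [PowerSeries.coeff_zero_eq_constantCoeff, hAdef, map_mul, hPdef, map_prod]
    have h1 : ∀ n ∈ Finset.Icc 1 N,
        PowerSeries.constantCoeff ((1 - (X : PowerSeries ℤ) ^ n) ^ I n) = 1 := by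
      intro n hn
      have hn1 : 1 ≤ n := (Finset.mem_Icc.mp hn).1
      simp [zero_pow (by omega : n ≠ 0)]
    rw [Finset.prod_eq_one h1]
    simp
  have hB0 : PowerSeries.coeff 0 B = 1 := by
    rw [hBdef]
    simp
  have hE : ∀ k, k ≤ N → PowerSeries.coeff k (A - B) = 0 := by
    intro k
    induction k using Nat.strong_induction_on with
    | _ k ih =>
      intro hk
      cases k with
      | zero =>
        rw [map_sub, hA0, hB0, sub_self]
      | succ k =>
        have h5 := hEB k (by omega)
        have hident : d⁄dX ℤ A * B - d⁄dX ℤ B * A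
            = d⁄dX ℤ (A - B) * B - d⁄dX ℤ B * (A - B) := by
          rw [map_sub]; ring
        rw [hident, map_sub] at h5
        have h6 : PowerSeries.coeff k (d⁄dX ℤ (A - B) * B)
            = PowerSeries.coeff (k + 1) (A - B) * ((k : ℤ) + 1) := by
          rw [PowerSeries.coeff_mul, Finset.sum_eq_single (k, 0)]
          · rw [PowerSeries.coeff_derivative, hB0, mul_one]
          · rintro ⟨i, j⟩ hmem hne
            simp only [Finset.HasAntidiagonal.mem_antidiagonal] at hmem
            have hi : i < k := by
              rcases Nat.lt_or_ge i k with h' | h'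
              · exact h'
              · exact absurd (by simp [(by omega : i = k), (by omega : j = 0)]) hne
            rw [PowerSeries.coeff_derivative, ih (i + 1) (by omega) (by omega), zero_mul,
              zero_mul]
          · intro habs
            exact absurd (Finset.HasAntidiagonal.mem_antidiagonal.2 (by simp)) habs
        have h7 : PowerSeries.coeff k (d⁄dX ℤ B * (A - B)) = 0 := by
          rw [PowerSeries.coeff_mul]
          apply Finset.sum_eq_zero
          rintro ⟨i, j⟩ hmem
          simp only [Finset.HasAntidiagonal.mem_antidiagonal] at hmem
          rw [ih j (by omega) (by omega), mul_zero]
        rw [h6, h7, sub_zero] at h5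
        have hk1 : ((k : ℤ) + 1) ≠ 0 := by positivity
        exact (mul_eq_zero.mp h5).resolve_right hk1
  ext m
  rw [PowerSeries.coeff_trunc, PowerSeries.coeff_trunc]
  split_ifs with h
  · have := hE m (by omega)
    rw [map_sub, sub_eq_zero] at this
    exact this
  · rfl
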